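/- For 2 ≤ N < ω, the localization dominating number 𝔡^Lc_{N,N−1} equals the continuum 𝔠: no family of fewer than 𝔠 slaloms φ with |φ(n)| ≤ N−1, φ(n) ⊆ {0,...,N−1}, localizes all of N^ω. -/
import Mathlib

open Cardinal Filter

namespace DLcAux

lemma exists_infinite_fibers (T : Type*) [Countable T] [Nonempty T] :
    ∃ d : ℕ → T, ∀ t, {n : ℕ | d n = t}.Infinite := by
  obtain ⟨f, hf⟩ := exists_surjective_nat T
  refine ⟨fun n => f (Nat.unpair n).2, fun t => ?_⟩
  obtain ⟨a, ha⟩ := hf t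
  apply Set.infinite_of_injective_forall_mem (f := fun k : ℕ => Nat.pair k a)
  · intro u v huv
    simpa [Nat.pair_eq_pair] using huv
  · intro k
    simp [Nat.unpair_pair, ha]

lemma lower_bound (N : ℕ) (hN : 2 ≤ N)
    (S : Set {φ : ℕ → Finset (Fin N) // ∀ n, (φ n).card ≤ N - 1})
    (hS : ∀ x : ℕ → Fin N, ∃ φ ∈ S, ∀ᶠ n in atTop, x n ∈ φ.1 n) :
    continuum ≤ #S := by
  classical
  haveI : NeZero N := ⟨by omega⟩
  haveI : Nonempty (Σ l : ℕ, ((Fin l → Fin N) → Fin N)) := ⟨⟨0, fun _ => ⟨0, by omega⟩⟩⟩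
  obtain ⟨d, hd⟩ := exists_infinite_fibers (Σ l : ℕ, ((Fin l → Fin N) → Fin N))
  set x : (ℕ → Fin N) → (ℕ → Fin N) := fun z n => (d n).2 (fun j => z j) with hxdef
  set A : {φ : ℕ → Finset (Fin N) // ∀ n, (φ n).card ≤ N - 1} → Set (ℕ → Fin N) :=
    fun φ => {z | ∀ᶠ n in atTop, x z n ∈ φ.1 n} with hAdef
  have key : ∀ φ : {φ : ℕ → Finset (Fin N) // ∀ n, (φ n).card ≤ N - 1},
      ∀ g : Fin N → (ℕ → Fin N), Function.Injective g →
      ¬ (∀ i, ∀ᶠ n in atTop, x (g i) n ∈ φ.1 n) := by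
    intro φ g hg hloc
    have hall : ∀ᶠ n in atTop, ∀ i, x (g i) n ∈ φ.1 n := eventually_all.mpr hloc
    obtain ⟨m, hm⟩ := eventually_atTop.mp hall
    -- separation level
    have hd2 : ∀ p : Fin N × Fin N, p.1 ≠ p.2 → ∃ k, g p.1 k ≠ g p.2 k := by
      intro p hp
      by_contra h
      push_neg at h
      exact hp (hg (funext h))
    choose! D hD using hd2
    set l : ℕ := (Finset.univ.sup fun p : Fin N × Fin N => D p) + 1 with hldef
    have hl : Function.Injective (fun i : Fin N => (fun j : Fin l => g i (j : ℕ))) := by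
      intro i i' hii
      by_contra hne
      have hk := hD (i, i') hne
      have hlt : D (i, i') < l :=
        Nat.lt_succ_of_le (Finset.le_sup (Finset.mem_univ _))
      exact hk (congrFun hii ⟨D (i, i'), hlt⟩)
    set ψ : (Fin l → Fin N) → Fin N :=
      fun v => if h : ∃ i, (fun j : Fin l => g i (j : ℕ)) = v then h.choose else 0 with hψdef
    have hψ : ∀ i, ψ (fun j : Fin l => g i (j : ℕ)) = i := by
      intro i
      have h : ∃ i', (fun j : Fin l => g i' (j : ℕ)) = (fun j : Fin l => g i (j : ℕ)) := ⟨i, rfl⟩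
      simp only [hψdef, dif_pos h]
      exact hl h.choose_spec
    obtain ⟨n, hn, hmn⟩ := (hd ⟨l, ψ⟩).exists_gt m
    have hv : ∀ i : Fin N, x (g i) n = i := by
      intro i
      show (d n).2 (fun j => g i (j : ℕ)) = i
      rw [hn]
      exact hψ i
    have hsub : (Finset.univ : Finset (Fin N)) ⊆ φ.1 n := by
      intro i _
      have := hm n hmn.le i
      rwa [hv i] at this
    have hcard := Finset.card_le_card hsub
    rw [Finset.card_univ, Fintype.card_fin] at hcard
    have := φ.2 n
    omega
  have hAfin : ∀ φ, (A φ).Finite := by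
    intro φ
    by_contra h
    have hinf : (A φ).Infinite := h
    obtain e := hinf.natEmbedding
    set g : Fin N → (ℕ → Fin N) := fun i => (e (i : ℕ)).1 with hgdef
    have hg : Function.Injective g := by
      intro i i' hii
      exact Fin.val_injective (e.injective (Subtype.ext hii))
    exact key φ g hg fun i => (e (i : ℕ)).2
  have hcover : (Set.univ : Set (ℕ → Fin N)) ⊆ ⋃ φ : S, A φ.1 := by
    intro z _
    obtain ⟨φ, hφS, hφ⟩ := hS (x z)
    exact Set.mem_iUnion.mpr ⟨⟨φ, hφS⟩, hφ⟩
  by_contra hlt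
  push_neg at hlt
  have h1 : #(ℕ → Fin N) ≤ #(⋃ φ : S, A φ.1) := by
    have := Cardinal.mk_le_mk_of_subset hcover
    rwa [Cardinal.mk_univ] at this
  have h2 : #(⋃ φ : S, A φ.1) ≤ #S * aleph0 := by
    refine (Cardinal.mk_iUnion_le _).trans ?_
    have hsup : (⨆ φ : S, #(A φ.1)) ≤ aleph0 :=
      ciSup_le' fun φ => ((hAfin φ.1).lt_aleph0).le
    exact mul_le_mul_right hsup _
  have h3 : continuum ≤ #(ℕ → Fin N) := by
    have hemb : #(ℕ → Bool) ≤ #(ℕ → Fin N) := by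
      refine ⟨⟨fun f n => if f n then ⟨1, by omega⟩ else ⟨0, by omega⟩, ?_⟩⟩
      intro f f' hff
      funext n
      by_contra hne
      have := congrFun hff n
      rcases Bool.eq_false_or_eq_true (f n) with h | h <;>
        rcases Bool.eq_false_or_eq_true (f' n) with h' | h' <;>
          simp [h, h'] at this hne
    refine le_trans ?_ hemb
    rw [Cardinal.mk_arrow]
    simp [Cardinal.two_power_aleph0]
  have : continuum < continuum := by
    calc continuum ≤ #S * aleph0 := h3.trans (h1.trans h2)
    _ < continuum := Cardinal.mul_lt_of_lt Cardinal.aleph0_le_continuum hlt Cardinal.aleph0_lt_continuum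
  exact lt_irrefl _ this

end DLcAux

/-- For 2 ≤ N < ω, 𝔡^Lc_{N,N-1} = 𝔠: the least cardinality of a family S of
slaloms φ : ℕ → [{0,…,N−1}]^{≤N−1} such that every x ∈ N^ω satisfies
x(n) ∈ φ(n) for all but finitely many n for some φ ∈ S, is the continuum. -/
theorem dLc_N_Nsub1_eq_continuum (N : ℕ) (hN : 2 ≤ N) :
    sInf { c : Cardinal |
      ∃ S : Set {φ : ℕ → Finset (Fin N) // ∀ n, (φ n).card ≤ N - 1},
        (∀ x : ℕ → Fin N, ∃ φ ∈ S, ∀ᶠ n in atTop, x n ∈ φ.1 n) ∧ #S = c }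
      = Cardinal.continuum := by
  have hub : #{φ : ℕ → Finset (Fin N) // ∀ n, (φ n).card ≤ N - 1} ≤ continuum := by
    calc #{φ : ℕ → Finset (Fin N) // ∀ n, (φ n).card ≤ N - 1}
        ≤ #(ℕ → Finset (Fin N)) := Cardinal.mk_subtype_le _
      _ = #(Finset (Fin N)) ^ (aleph0 : Cardinal) := by rw [Cardinal.mk_arrow]; simp
      _ ≤ continuum ^ (aleph0 : Cardinal) :=
          Cardinal.power_le_power_right
            ((Cardinal.lt_aleph0_of_finite _).le.trans Cardinal.aleph0_le_continuum)
      _ = continuum := Cardinal.continuum_power_aleph0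
  have hmem : #(Set.univ : Set {φ : ℕ → Finset (Fin N) // ∀ n, (φ n).card ≤ N - 1}) ∈
      { c : Cardinal |
        ∃ S : Set {φ : ℕ → Finset (Fin N) // ∀ n, (φ n).card ≤ N - 1},
          (∀ x : ℕ → Fin N, ∃ φ ∈ S, ∀ᶠ n in atTop, x n ∈ φ.1 n) ∧ #S = c } := by
    refine ⟨Set.univ, fun x => ⟨⟨fun n => {x n}, fun n => by simp; omega⟩, Set.mem_univ _, ?_⟩, rfl⟩
    exact Filter.Eventually.of_forall fun n => Finset.mem_singleton_self _
  apply le_antisymm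
  · refine (csInf_le' hmem).trans ?_
    rwa [Cardinal.mk_univ]
  · apply le_csInf ⟨_, hmem⟩
    rintro c ⟨S, hS, rfl⟩
    exact DLcAux.lower_bound N hN S hS
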